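/- arXiv:2404.15359 — 3 statements merged into one kernel-verified Lean document; each statement's English description precedes it below -/
import Mathlib

section
/- Let X and U be standard Borel spaces, let μ and ν be probability measures on X × X, let κ₁, κ₂, η₁, η₂ : X → U be Markov kernels, and assume the Kullback–Leibler divergences below are defined (the relevant absolute continuities hold). Let P be the measure on (X × X) × (U × U) obtained by composing μ with the kernel sending (x₁,x₂) to the product measure (κ₁ x₁) × (κ₂ x₂), and let Q be the analogous measure built from ν, η₁, η₂. Then KL(P ‖ Q) = KL(μ ‖ ν) + ∫ KL(κ₂ x₂ ‖ η₂ x₂) dμ(x₁,x₂) + ∫ KL(κ₁ x₁ ‖ η₁ x₁) dμ(x₁,x₂). -/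
open MeasureTheory ProbabilityTheory Filter Real Topology
open scoped NNReal ENNReal Classical

/-- Kullback–Leibler divergence: `∫ log (dP/dQ) dP` if `P ≪ Q` (and the integral is defined),
`+∞` otherwise. -/
noncomputable def klDiv {α : Type*} [MeasurableSpace α] (P Q : Measure α) : EReal :=
  if P ≪ Q ∧ Integrable (llr P Q) P then ((∫ x, llr P Q x ∂P : ℝ) : EReal) else ⊤

/-- The kernel `(x₁, x₂) ↦ (κ₁ x₁) × (κ₂ x₂)` on `X × X`, sending a pair of states to the
product of the two conditional laws of the auxiliary variables. -/
noncomputable def pairKernel {X U : Type*} [MeasurableSpace X] [MeasurableSpace U]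
    (κ₁ κ₂ : Kernel X U) : Kernel (X × X) (U × U) :=
  (κ₁.comap Prod.fst measurable_fst) ×ₖ (κ₂.comap Prod.snd measurable_snd)

section Basic

variable {α : Type*} [MeasurableSpace α] {P Q : Measure α}

lemma klDiv_ne_top_iff : klDiv P Q ≠ ⊤ ↔ P ≪ Q ∧ Integrable (llr P Q) P := by
  constructor
  · intro h
    by_contra hc
    exact h (by simp [klDiv, hc])
  · intro h
    simp only [klDiv, if_pos h]
    exact EReal.coe_ne_top _

lemma klDiv_eq_integral (h : P ≪ Q) (h2 : Integrable (llr P Q) P) :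
    klDiv P Q = ((∫ x, llr P Q x ∂P : ℝ) : EReal) := by
  have : P ≪ Q ∧ Integrable (llr P Q) P := ⟨h, h2⟩
  simp only [klDiv, if_pos this]

lemma klDiv_toReal (h : P ≪ Q) (h2 : Integrable (llr P Q) P) :
    (klDiv P Q).toReal = ∫ x, llr P Q x ∂P := by
  rw [klDiv_eq_integral h h2, EReal.toReal_coe]

lemma klDiv_ne_bot (P Q : Measure α) : klDiv P Q ≠ ⊥ := by
  unfold klDiv
  split_ifs
  · exact EReal.coe_ne_bot _
  · simp

/-- bound on the negative part of the log-likelihood ratio -/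
lemma integral_max_neg_llr_le [IsProbabilityMeasure P] [IsProbabilityMeasure Q]
    (hPQ : P ≪ Q) :
    ∫ x, max (-llr P Q x) 0 ∂P ≤ 1 := by
  have hmeas : Measurable fun x ↦ max (-llr P Q x) 0 :=
    (measurable_llr P Q).neg.max measurable_const
  have hrw := integral_eq_lintegral_of_nonneg_ae (μ := P)
    (f := fun x ↦ max (-llr P Q x) 0)
    (Filter.Eventually.of_forall fun x ↦ le_max_right _ _) hmeas.aestronglyMeasurable
  rw [hrw]
  have hbound : ∫⁻ x, ENNReal.ofReal (max (-llr P Q x) 0) ∂P ≤ 1 := by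
    have hae : ∀ᵐ x ∂P, ENNReal.ofReal (max (-llr P Q x) 0) ≤ (P.rnDeriv Q x)⁻¹ := by
      filter_upwards [Measure.rnDeriv_pos hPQ, hPQ.ae_le (Measure.rnDeriv_lt_top P Q)]
        with x hpos hlt
      have ht : 0 < (P.rnDeriv Q x).toReal := ENNReal.toReal_pos hpos.ne' hlt.ne
      have h1 : max (-llr P Q x) 0 ≤ ((P.rnDeriv Q x).toReal)⁻¹ := by
        rw [max_le_iff]
        refine ⟨?_, by positivity⟩
        have := Real.log_le_sub_one_of_pos (x := ((P.rnDeriv Q x).toReal)⁻¹) (by positivity)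
        rw [Real.log_inv] at this
        have : -Real.log (P.rnDeriv Q x).toReal ≤ ((P.rnDeriv Q x).toReal)⁻¹ - 1 := this
        calc -llr P Q x = -Real.log (P.rnDeriv Q x).toReal := rfl
          _ ≤ ((P.rnDeriv Q x).toReal)⁻¹ - 1 := this
          _ ≤ ((P.rnDeriv Q x).toReal)⁻¹ := by linarith
      calc ENNReal.ofReal (max (-llr P Q x) 0) ≤ ENNReal.ofReal (((P.rnDeriv Q x).toReal)⁻¹) :=
            ENNReal.ofReal_le_ofReal h1
        _ = (ENNReal.ofReal ((P.rnDeriv Q x).toReal))⁻¹ := ENNReal.ofReal_inv_of_pos ht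
        _ = (P.rnDeriv Q x)⁻¹ := by rw [ENNReal.ofReal_toReal hlt.ne]
    calc ∫⁻ x, ENNReal.ofReal (max (-llr P Q x) 0) ∂P ≤ ∫⁻ x, (P.rnDeriv Q x)⁻¹ ∂P :=
          lintegral_mono_ae hae
      _ = ∫⁻ x, P.rnDeriv Q x * (P.rnDeriv Q x)⁻¹ ∂Q := by
          have h := lintegral_withDensity_eq_lintegral_mul Q (Measure.measurable_rnDeriv P Q)
            (Measure.measurable_rnDeriv P Q).inv
          simp only [Pi.mul_apply, Pi.inv_apply] at h
          rw [← h, Measure.withDensity_rnDeriv_eq P Q hPQ]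
      _ ≤ ∫⁻ _, 1 ∂Q := by
          refine lintegral_mono fun x ↦ ?_
          rcases eq_or_ne (P.rnDeriv Q x) 0 with h0 | h0
          · simp [h0]
          rcases eq_or_ne (P.rnDeriv Q x) ⊤ with hT | hT
          · simp [hT]
          · rw [ENNReal.mul_inv_cancel h0 hT]
      _ = 1 := by simp
  calc (∫⁻ x, ENNReal.ofReal (max (-llr P Q x) 0) ∂P).toReal ≤ (1 : ℝ≥0∞).toReal :=
        ENNReal.toReal_mono (by simp) hbound
    _ = 1 := by simp

lemma integral_abs_llr_le [IsProbabilityMeasure P] [IsProbabilityMeasure Q]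
    (hPQ : P ≪ Q) (hint : Integrable (llr P Q) P) :
    ∫ x, |llr P Q x| ∂P ≤ ∫ x, llr P Q x ∂P + 2 := by
  have hmax : Integrable (fun x ↦ max (-llr P Q x) 0) P :=
    hint.neg_part
  have habs : ∀ x, |llr P Q x| = llr P Q x + 2 * max (-llr P Q x) 0 := by
    intro x
    rcases le_or_gt 0 (llr P Q x) with h | h
    · rw [abs_of_nonneg h, max_eq_right (by linarith)]; ring
    · rw [abs_of_neg h, max_eq_left (by linarith)]; ring
  calc ∫ x, |llr P Q x| ∂P = ∫ x, (llr P Q x + 2 * max (-llr P Q x) 0) ∂P := by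
        simp_rw [habs]
    _ = ∫ x, llr P Q x ∂P + 2 * ∫ x, max (-llr P Q x) 0 ∂P := by
        rw [integral_add hint (hmax.const_mul 2), integral_const_mul]
    _ ≤ ∫ x, llr P Q x ∂P + 2 * 1 := by
        have := integral_max_neg_llr_le hPQ
        nlinarith
    _ = ∫ x, llr P Q x ∂P + 2 := by ring

end Basic

section ChainRule

variable {α β : Type*} [MeasurableSpace α] [MeasurableSpace β]
  [MeasurableSpace.CountablyGenerated β]

lemma klDiv_compProd (μ ν : Measure α) [IsProbabilityMeasure μ] [IsProbabilityMeasure ν]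
    (κ η : Kernel α β) [IsMarkovKernel κ] [IsMarkovKernel η]
    (hμν : klDiv μ ν ≠ ⊤)
    (hae : ∀ᵐ x ∂μ, klDiv (κ x) (η x) ≠ ⊤)
    (hint : Integrable (fun x ↦ (klDiv (κ x) (η x)).toReal) μ) :
    klDiv (μ ⊗ₘ κ) (ν ⊗ₘ η)
      = klDiv μ ν + ((∫ x, (klDiv (κ x) (η x)).toReal ∂μ : ℝ) : EReal) := by
  obtain ⟨hac, hμint⟩ := klDiv_ne_top_iff.mp hμν
  have haeAC : ∀ᵐ x ∂μ, κ x ≪ η x ∧ Integrable (llr (κ x) (η x)) (κ x) := by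
    filter_upwards [hae] with x hx
    exact klDiv_ne_top_iff.mp hx
  set d : α → ℝ≥0∞ := μ.rnDeriv ν with hd_def
  have hd_meas : Measurable d := μ.measurable_rnDeriv ν
  set r : α × β → ℝ≥0∞ := fun p ↦ Kernel.rnDeriv κ η p.1 p.2 with hr_def
  have hr_meas : Measurable r := Kernel.measurable_rnDeriv κ η
  set F : α × β → ℝ≥0∞ := fun p ↦ d p.1 * r p with hF_def
  have hF_meas : Measurable F := (hd_meas.comp measurable_fst).mul hr_meas
  have hμ_eq : ν.withDensity d = μ := Measure.withDensity_rnDeriv_eq μ ν hac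
  have hκη_ν : ∀ᵐ x ∂ν, d x ≠ 0 → κ x ≪ η x := by
    refine (ae_withDensity_iff hd_meas).mp ?_
    rw [hμ_eq]
    exact haeAC.mono fun x hx ↦ hx.1
  have hQF : (ν ⊗ₘ η).withDensity F = μ ⊗ₘ κ := by
    ext s hs
    rw [withDensity_apply F hs, ← lintegral_indicator hs,
      Measure.lintegral_compProd (hF_meas.indicator hs),
      Measure.compProd_apply hs, ← hμ_eq]
    have h := lintegral_withDensity_eq_lintegral_mul ν hd_meas
      (Kernel.measurable_kernel_prodMk_left (κ := κ) hs)
    simp only [Pi.mul_apply] at h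
    rw [h]
    refine lintegral_congr_ae ?_
    filter_upwards [hκη_ν] with x hx
    rcases eq_or_ne (d x) 0 with h0 | h0
    · simp [hF_def, Set.indicator_apply, h0]
    · have hxac := hx h0
      have heq : ∀ y, s.indicator F (x, y)
          = d x * Set.indicator (Prod.mk x ⁻¹' s) (fun y ↦ r (x, y)) y := by
        intro y
        by_cases hy : (x, y) ∈ s <;>
          simp [Set.indicator_apply, Set.mem_preimage, hy, hF_def]
      calc ∫⁻ y, s.indicator F (x, y) ∂η x
          = ∫⁻ y, d x * Set.indicator (Prod.mk x ⁻¹' s) (fun y ↦ r (x, y)) y ∂η x := by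
            simp_rw [heq]
        _ = d x * ∫⁻ y, Set.indicator (Prod.mk x ⁻¹' s) (fun y ↦ r (x, y)) y ∂η x :=
            lintegral_const_mul _ ((hr_meas.comp measurable_prodMk_left).indicator
              (measurable_prodMk_left hs))
        _ = d x * κ x (Prod.mk x ⁻¹' s) := by
            rw [lintegral_indicator (measurable_prodMk_left hs)]
            congr 1
            rw [← Measure.setLIntegral_rnDeriv hxac]
            refine lintegral_congr_ae (ae_restrict_of_ae ?_)
            exact Kernel.rnDeriv_eq_rnDeriv_measure
  have hacP : μ ⊗ₘ κ ≪ ν ⊗ₘ η := by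
    rw [← hQF]; exact withDensity_absolutelyContinuous _ _
  have hrnP : (μ ⊗ₘ κ).rnDeriv (ν ⊗ₘ η) =ᵐ[ν ⊗ₘ η] F := by
    rw [← hQF]; exact Measure.rnDeriv_withDensity _ hF_meas
  have hd_posP : ∀ᵐ p ∂(μ ⊗ₘ κ), d p.1 ≠ 0 ∧ d p.1 ≠ ∞ := by
    refine (Measure.ae_compProd_iff ?_).mpr ?_
    · exact ((hd_meas.comp measurable_fst) (measurableSet_singleton 0).compl).inter
        ((hd_meas.comp measurable_fst) (measurableSet_singleton ∞).compl)
    filter_upwards [Measure.rnDeriv_pos hac, hac.ae_le (Measure.rnDeriv_ne_top μ ν)] with x h1 h2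
    exact Filter.Eventually.of_forall fun y ↦ ⟨h1.ne', h2⟩
  have hr_posP : ∀ᵐ p ∂(μ ⊗ₘ κ), r p ≠ 0 ∧ r p ≠ ∞ := by
    refine (Measure.ae_compProd_iff ?_).mpr ?_
    · exact (hr_meas (measurableSet_singleton 0).compl).inter
        (hr_meas (measurableSet_singleton ∞).compl)
    filter_upwards [haeAC] with x hx
    filter_upwards [Kernel.rnDeriv_pos hx.1, hx.1.ae_le (Kernel.rnDeriv_ne_top κ η)] with y h1 h2
    exact ⟨h1.ne', h2⟩
  set g : α × β → ℝ := fun p ↦ log (r p).toReal with hg_def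
  have hg_meas : Measurable g := Real.measurable_log.comp hr_meas.ennreal_toReal
  have hgx : ∀ x, κ x ≪ η x → (fun y ↦ g (x, y)) =ᵐ[κ x] llr (κ x) (η x) := by
    intro x hx
    filter_upwards [hx.ae_le (Kernel.rnDeriv_eq_rnDeriv_measure (κ := κ) (η := η) (a := x))]
      with y hy
    show log (r (x, y)).toReal = llr (κ x) (η x) y
    rw [hr_def]
    simp only []
    rw [hy]
    rfl
  have hllr_eq : llr (μ ⊗ₘ κ) (ν ⊗ₘ η) =ᵐ[μ ⊗ₘ κ] fun p ↦ llr μ ν p.1 + g p := by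
    filter_upwards [hacP.ae_le hrnP, hd_posP, hr_posP] with p hp hd hr
    have hdt : (d p.1).toReal ≠ 0 := ENNReal.toReal_ne_zero.mpr ⟨hd.1, hd.2⟩
    have hrt : (r p).toReal ≠ 0 := ENNReal.toReal_ne_zero.mpr ⟨hr.1, hr.2⟩
    calc llr (μ ⊗ₘ κ) (ν ⊗ₘ η) p = log ((μ ⊗ₘ κ).rnDeriv (ν ⊗ₘ η) p).toReal := rfl
      _ = log (F p).toReal := by rw [hp]
      _ = log ((d p.1).toReal * (r p).toReal) := by rw [hF_def]; simp only [ENNReal.toReal_mul]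
      _ = log (d p.1).toReal + log (r p).toReal := Real.log_mul hdt hrt
      _ = llr μ ν p.1 + g p := rfl
  have hgx_int : ∀ᵐ x ∂μ, Integrable (fun y ↦ g (x, y)) (κ x) := by
    filter_upwards [haeAC] with x hx
    exact hx.2.congr (hgx x hx.1).symm
  have hnorm_int : Integrable (fun x ↦ ∫ y, ‖g (x, y)‖ ∂κ x) μ := by
    refine Integrable.mono' (hint.add (integrable_const 2)) ?_ ?_
    · exact (hg_meas.norm.stronglyMeasurable.integral_kernel_prod_right').aestronglyMeasurable
    · filter_upwards [haeAC] with x hx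
      have h1 : ∫ y, ‖g (x, y)‖ ∂κ x = ∫ y, |llr (κ x) (η x) y| ∂κ x := by
        refine integral_congr_ae ?_
        filter_upwards [hgx x hx.1] with y hy
        rw [Real.norm_eq_abs, hy]
      rw [Real.norm_of_nonneg (integral_nonneg fun y ↦ norm_nonneg _), h1]
      calc ∫ y, |llr (κ x) (η x) y| ∂κ x ≤ ∫ y, llr (κ x) (η x) y ∂κ x + 2 :=
            integral_abs_llr_le hx.1 hx.2
        _ = (klDiv (κ x) (η x)).toReal + 2 := by rw [klDiv_toReal hx.1 hx.2]
  have hg_int : Integrable g (μ ⊗ₘ κ) := by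
    rw [Measure.integrable_compProd_iff hg_meas.aestronglyMeasurable]
    exact ⟨hgx_int, hnorm_int⟩
  have hmap : (μ ⊗ₘ κ).map Prod.fst = μ := Measure.fst_compProd μ κ
  have hfst_int : Integrable (fun p ↦ llr μ ν p.1) (μ ⊗ₘ κ) := by
    have h : Integrable (llr μ ν) ((μ ⊗ₘ κ).map Prod.fst) := by rw [hmap]; exact hμint
    exact (integrable_map_measure (stronglyMeasurable_llr μ ν).aestronglyMeasurable
      measurable_fst.aemeasurable).mp h
  have hP_int : Integrable (llr (μ ⊗ₘ κ) (ν ⊗ₘ η)) (μ ⊗ₘ κ) :=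
    ((hfst_int.add hg_int).congr hllr_eq.symm)
  have hval : ∫ p, llr (μ ⊗ₘ κ) (ν ⊗ₘ η) p ∂(μ ⊗ₘ κ)
      = ∫ x, llr μ ν x ∂μ + ∫ x, (klDiv (κ x) (η x)).toReal ∂μ := by
    rw [integral_congr_ae hllr_eq, integral_add hfst_int hg_int]
    congr 1
    · calc ∫ p, llr μ ν p.1 ∂(μ ⊗ₘ κ)
          = ∫ x, llr μ ν x ∂((μ ⊗ₘ κ).map Prod.fst) := by
            rw [integral_map measurable_fst.aemeasurable
              (by rw [hmap]; exact (stronglyMeasurable_llr μ ν).aestronglyMeasurable)]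
        _ = ∫ x, llr μ ν x ∂μ := by rw [hmap]
    · rw [Measure.integral_compProd hg_int]
      refine integral_congr_ae ?_
      filter_upwards [haeAC] with x hx
      rw [integral_congr_ae (hgx x hx.1), klDiv_toReal hx.1 hx.2]
  rw [klDiv_eq_integral hacP hP_int, klDiv_eq_integral hac hμint, hval, EReal.coe_add]

end ChainRule

section ProdKL

variable {β : Type*} [MeasurableSpace β] [MeasurableSpace.CountablyGenerated β]

lemma klDiv_prod (P₁ P₂ Q₁ Q₂ : Measure β) [IsProbabilityMeasure P₁] [IsProbabilityMeasure P₂]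
    [IsProbabilityMeasure Q₁] [IsProbabilityMeasure Q₂]
    (h1 : klDiv P₁ Q₁ ≠ ⊤) (h2 : klDiv P₂ Q₂ ≠ ⊤) :
    klDiv (P₁.prod P₂) (Q₁.prod Q₂) = klDiv P₁ Q₁ + klDiv P₂ Q₂ := by
  have hP : P₁.prod P₂ = P₁ ⊗ₘ Kernel.const β P₂ := Measure.compProd_const.symm
  have hQ : Q₁.prod Q₂ = Q₁ ⊗ₘ Kernel.const β Q₂ := Measure.compProd_const.symm
  rw [hP, hQ, klDiv_compProd P₁ Q₁ _ _ h1
    (Filter.Eventually.of_forall fun x ↦ by simpa [Kernel.const_apply] using h2)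
    (by simpa [Kernel.const_apply] using integrable_const (μ := P₁) ((klDiv P₂ Q₂).toReal))]
  congr 1
  simp only [Kernel.const_apply]
  rw [integral_const]
  simp only [probReal_univ, one_smul]
  exact EReal.coe_toReal h2 (klDiv_ne_bot _ _)

end ProdKL

/-- The three-term loss decomposition -/
theorem klDiv_pair_decomposition {X U : Type*}
    [MeasurableSpace X] [StandardBorelSpace X]
    [MeasurableSpace U] [StandardBorelSpace U] [Nonempty U]
    (μ ν : Measure (X × X)) [IsProbabilityMeasure μ] [IsProbabilityMeasure ν]
    (κ₁ κ₂ η₁ η₂ : Kernel X U)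
    [IsMarkovKernel κ₁] [IsMarkovKernel κ₂] [IsMarkovKernel η₁] [IsMarkovKernel η₂]
    (hPQ : klDiv (μ ⊗ₘ pairKernel κ₁ κ₂) (ν ⊗ₘ pairKernel η₁ η₂) ≠ ⊤)
    (hμν : klDiv μ ν ≠ ⊤)
    (h2ae : ∀ᵐ p ∂μ, klDiv (κ₂ p.2) (η₂ p.2) ≠ ⊤)
    (h2int : Integrable (fun p ↦ (klDiv (κ₂ p.2) (η₂ p.2)).toReal) μ)
    (h1ae : ∀ᵐ p ∂μ, klDiv (κ₁ p.1) (η₁ p.1) ≠ ⊤)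
    (h1int : Integrable (fun p ↦ (klDiv (κ₁ p.1) (η₁ p.1)).toReal) μ) :
    klDiv (μ ⊗ₘ pairKernel κ₁ κ₂) (ν ⊗ₘ pairKernel η₁ η₂) =
      klDiv μ ν
        + ((∫ p, (klDiv (κ₂ p.2) (η₂ p.2)).toReal ∂μ : ℝ) : EReal)
        + ((∫ p, (klDiv (κ₁ p.1) (η₁ p.1)).toReal ∂μ : ℝ) : EReal) := by
  haveI : IsMarkovKernel (pairKernel κ₁ κ₂) := by unfold pairKernel; infer_instance
  haveI : IsMarkovKernel (pairKernel η₁ η₂) := by unfold pairKernel; infer_instance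
  have hpair : ∀ (κ κ' : Kernel X U) [IsMarkovKernel κ] [IsMarkovKernel κ'] (p : X × X),
      pairKernel κ κ' p = (κ p.1).prod (κ' p.2) := by
    intro κ κ' _ _ p
    rw [pairKernel, Kernel.prod_apply, Kernel.comap_apply, Kernel.comap_apply]
  have haeP : ∀ᵐ p ∂μ, klDiv (pairKernel κ₁ κ₂ p) (pairKernel η₁ η₂ p)
      = klDiv (κ₁ p.1) (η₁ p.1) + klDiv (κ₂ p.2) (η₂ p.2) := by
    filter_upwards [h1ae, h2ae] with p hp1 hp2
    rw [hpair, hpair, klDiv_prod _ _ _ _ hp1 hp2]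
  have haeT : ∀ᵐ p ∂μ, klDiv (pairKernel κ₁ κ₂ p) (pairKernel η₁ η₂ p) ≠ ⊤ := by
    filter_upwards [haeP, h1ae, h2ae] with p hp h1 h2
    rw [hp]
    exact (EReal.add_lt_top h1 h2).ne
  have haeReal : ∀ᵐ p ∂μ, (klDiv (pairKernel κ₁ κ₂ p) (pairKernel η₁ η₂ p)).toReal
      = (klDiv (κ₂ p.2) (η₂ p.2)).toReal + (klDiv (κ₁ p.1) (η₁ p.1)).toReal := by
    filter_upwards [haeP, h1ae, h2ae] with p hp h1 h2
    rw [hp, EReal.toReal_add h1 (klDiv_ne_bot _ _) h2 (klDiv_ne_bot _ _), add_comm]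
  have hintP : Integrable
      (fun p ↦ (klDiv (pairKernel κ₁ κ₂ p) (pairKernel η₁ η₂ p)).toReal) μ :=
    (h2int.add h1int).congr (haeReal.mono fun p hp ↦ hp.symm)
  rw [klDiv_compProd μ ν _ _ hμν haeT hintP, integral_congr_ae haeReal,
    integral_add h2int h1int, EReal.coe_add, ← add_assoc]
end

section
/- Let μ be a probability measure on ℝ whose identity map is square-integrable, with mean m = ∫ x dμ and variance p = ∫ (x − m)² dμ > 0, let f : ℝ → ℝ be square-integrable with respect to μ, and let q > 0. Set a* = (∫ x·f(x) dμ − m·∫ f dμ)/p, b* = ∫ f dμ − a*·m, s* = ∫ (f(x) − a*·x − b*)² dμ, and ω* = q + s*. Then for all a, b ∈ ℝ and all ω > 0, ∫ KL( N(f(x), q) ‖ N(a·x + b, ω) ) dμ(x) ≥ ∫ KL( N(f(x), q) ‖ N(a*·x + b*, ω*) ) dμ(x) = ½·log((q + s*)/q). -/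
open MeasureTheory ProbabilityTheory Filter Real Topology
open scoped NNReal ENNReal Classical

lemma my_integral_mul_exp_neg_mul_sq {b : ℝ} (hb : 0 < b) :
    ∫ x : ℝ, x * Real.exp (-b * x ^ 2) = 0 := by
  have hderiv : ∀ x : ℝ, HasDerivAt (fun x : ℝ => -(2 * b)⁻¹ * Real.exp (-b * x ^ 2))
      (x * Real.exp (-b * x ^ 2)) x := by
    intro x
    have h1 : HasDerivAt (fun x : ℝ => -b * x ^ 2) (-b * (2 * x)) x := by
      simpa using ((hasDerivAt_pow 2 x).const_mul (-b))
    have h2 := (h1.exp).const_mul (-(2 * b)⁻¹)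
    refine h2.congr_deriv ?_
    linear_combination (x * Real.exp (-b * x ^ 2)) * inv_mul_cancel₀ (mul_pos two_pos hb).ne'
  have hint : Integrable (fun x : ℝ => x * Real.exp (-b * x ^ 2)) :=
    integrable_mul_exp_neg_mul_sq hb
  have hfi : Integrable (fun x : ℝ => -(2 * b)⁻¹ * Real.exp (-b * x ^ 2)) :=
    (integrable_exp_neg_mul_sq hb).const_mul _
  exact MeasureTheory.integral_eq_zero_of_hasDerivAt_of_integrable hderiv hint hfi

lemma my_integrable_sq_mul_exp_neg_mul_sq {b : ℝ} (hb : 0 < b) :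
    Integrable (fun x : ℝ => x ^ 2 * Real.exp (-b * x ^ 2)) := by
  have := integrable_rpow_mul_exp_neg_mul_sq hb (s := 2) (by norm_num)
  refine this.congr ?_
  filter_upwards with x
  rw [show ((2:ℝ)) = ((2:ℕ):ℝ) by norm_num, Real.rpow_natCast]

lemma my_integral_sq_mul_exp_neg_mul_sq {b : ℝ} (hb : 0 < b) :
    ∫ x : ℝ, x ^ 2 * Real.exp (-b * x ^ 2) = (2 * b)⁻¹ * Real.sqrt (π / b) := by
  have hderiv : ∀ x : ℝ, HasDerivAt (fun x : ℝ => -(2 * b)⁻¹ * (x * Real.exp (-b * x ^ 2)))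
      (x ^ 2 * Real.exp (-b * x ^ 2) - (2 * b)⁻¹ * Real.exp (-b * x ^ 2)) x := by
    intro x
    have h1 : HasDerivAt (fun x : ℝ => -b * x ^ 2) (-b * (2 * x)) x := by
      simpa using ((hasDerivAt_pow 2 x).const_mul (-b))
    have h2 : HasDerivAt (fun x : ℝ => x * Real.exp (-b * x ^ 2))
        (1 * Real.exp (-b * x ^ 2) + x * (Real.exp (-b * x ^ 2) * (-b * (2 * x)))) x :=
      (hasDerivAt_id x).mul h1.exp
    have h3 := h2.const_mul (-(2 * b)⁻¹)
    refine h3.congr_deriv ?_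
    linear_combination (x ^ 2 * Real.exp (-b * x ^ 2)) * inv_mul_cancel₀ (mul_pos two_pos hb).ne'
  have hint1 := my_integrable_sq_mul_exp_neg_mul_sq hb
  have hint2 : Integrable (fun x : ℝ => (2 * b)⁻¹ * Real.exp (-b * x ^ 2)) :=
    (integrable_exp_neg_mul_sq hb).const_mul _
  have hzero : ∫ x : ℝ, (x ^ 2 * Real.exp (-b * x ^ 2) - (2 * b)⁻¹ * Real.exp (-b * x ^ 2)) = 0 := by
    refine MeasureTheory.integral_eq_zero_of_hasDerivAt_of_integrable hderiv (hint1.sub hint2) ?_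
    exact ((integrable_mul_exp_neg_mul_sq hb).const_mul _)
  rw [integral_sub hint1 hint2] at hzero
  rw [sub_eq_zero] at hzero
  rw [hzero, MeasureTheory.integral_const_mul, integral_gaussian]

lemma my_gauss_density (mm : ℝ) {v : ℝ≥0} (hv : v ≠ 0) :
    gaussianReal mm v = volume.withDensity
      (fun x => ((gaussianPDFReal mm v x).toNNReal : ℝ≥0∞)) := by
  rw [gaussianReal_of_var_ne_zero mm hv]
  rfl

lemma my_integral_gaussianReal (mm : ℝ) {v : ℝ≥0} (hv : v ≠ 0) (g : ℝ → ℝ) :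
    ∫ x, g x ∂(gaussianReal mm v) = ∫ x, gaussianPDFReal mm v x * g x := by
  rw [my_gauss_density mm hv,
    integral_withDensity_eq_integral_smul₀
      ((measurable_gaussianPDFReal mm v).real_toNNReal.aemeasurable) g]
  congr 1
  ext x
  rw [NNReal.smul_def, smul_eq_mul, Real.coe_toNNReal _ (gaussianPDFReal_nonneg mm v x)]

lemma my_integrable_gaussianReal (mm : ℝ) {v : ℝ≥0} (hv : v ≠ 0) (g : ℝ → ℝ) :
    Integrable g (gaussianReal mm v) ↔
      Integrable (fun x => gaussianPDFReal mm v x * g x) volume := by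
  rw [my_gauss_density mm hv,
    integrable_withDensity_iff_integrable_smul₀
      ((measurable_gaussianPDFReal mm v).real_toNNReal.aemeasurable)]
  constructor <;> intro h <;> refine h.congr (Filter.Eventually.of_forall fun x => ?_) <;>
    simp only [NNReal.smul_def, smul_eq_mul, Real.coe_toNNReal _ (gaussianPDFReal_nonneg mm v x)]

lemma my_pdf_zero_eq {v : ℝ≥0} (hv : v ≠ 0) (y x : ℝ) :
    gaussianPDFReal 0 v x * y =
      (Real.sqrt (2 * π * v))⁻¹ * (y * Real.exp (-(2 * (v:ℝ))⁻¹ * x ^ 2)) := by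
  have hv' : (0:ℝ) < v := lt_of_le_of_ne v.2 (by exact_mod_cast (Ne.symm hv))
  rw [gaussianPDFReal]
  have : -(x - 0) ^ 2 / (2 * (v:ℝ)) = -(2 * (v:ℝ))⁻¹ * x ^ 2 := by
    field_simp
    ring
  rw [this]
  ring

lemma my_sq_moment_zero {v : ℝ≥0} (hv : v ≠ 0) (d : ℝ) :
    (Integrable (fun x => (x + d) ^ 2) (gaussianReal 0 v)) ∧
      ∫ x, (x + d) ^ 2 ∂(gaussianReal 0 v) = (v : ℝ) + d ^ 2 := by
  have hv' : (0:ℝ) < v := lt_of_le_of_ne v.2 (by exact_mod_cast (Ne.symm hv))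
  set b : ℝ := (2 * (v:ℝ))⁻¹ with hb
  have hbpos : 0 < b := by positivity
  set C : ℝ := (Real.sqrt (2 * π * v))⁻¹ with hC
  have h1 : Integrable (fun x : ℝ => x ^ 2 * Real.exp (-b * x ^ 2)) :=
    my_integrable_sq_mul_exp_neg_mul_sq hbpos
  have h2 : Integrable (fun x : ℝ => x * Real.exp (-b * x ^ 2)) :=
    integrable_mul_exp_neg_mul_sq hbpos
  have h3 : Integrable (fun x : ℝ => Real.exp (-b * x ^ 2)) :=
    integrable_exp_neg_mul_sq hbpos
  have hexpand : ∀ x : ℝ, (x + d) ^ 2 * Real.exp (-b * x ^ 2) =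
      x ^ 2 * Real.exp (-b * x ^ 2) + (2 * d) * (x * Real.exp (-b * x ^ 2))
        + d ^ 2 * Real.exp (-b * x ^ 2) := by intro x; ring
  have hint : Integrable (fun x : ℝ => (x + d) ^ 2 * Real.exp (-b * x ^ 2)) := by
    refine (((h1.add (h2.const_mul (2 * d))).add (h3.const_mul (d ^ 2))).congr ?_)
    exact Filter.Eventually.of_forall fun x => (hexpand x).symm
  constructor
  · rw [my_integrable_gaussianReal 0 hv]
    refine ((hint.const_mul C).congr ?_)
    exact Filter.Eventually.of_forall fun x => (my_pdf_zero_eq hv ((x + d) ^ 2) x).symm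
  · rw [my_integral_gaussianReal 0 hv]
    calc ∫ x, gaussianPDFReal 0 v x * (x + d) ^ 2
        = ∫ x, C * ((x + d) ^ 2 * Real.exp (-b * x ^ 2)) := by
          congr 1; ext x; exact my_pdf_zero_eq hv ((x + d) ^ 2) x
      _ = C * ∫ x, (x + d) ^ 2 * Real.exp (-b * x ^ 2) := by
          rw [MeasureTheory.integral_const_mul]
      _ = C * (((2 * b)⁻¹ * Real.sqrt (π / b)) + (2 * d) * 0 + d ^ 2 * Real.sqrt (π / b)) := by
          congr 1
          rw [integral_congr_ae (Filter.Eventually.of_forall hexpand)]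
          have e1 : ∫ x : ℝ, (x ^ 2 * Real.exp (-b * x ^ 2) + 2 * d * (x * Real.exp (-b * x ^ 2))
              + d ^ 2 * Real.exp (-b * x ^ 2)) =
              (∫ x : ℝ, (x ^ 2 * Real.exp (-b * x ^ 2) + 2 * d * (x * Real.exp (-b * x ^ 2))))
                + ∫ x : ℝ, d ^ 2 * Real.exp (-b * x ^ 2) :=
            integral_add (h1.add (h2.const_mul (2 * d))) (h3.const_mul (d ^ 2))
          have e2 : ∫ x : ℝ, (x ^ 2 * Real.exp (-b * x ^ 2) + 2 * d * (x * Real.exp (-b * x ^ 2)))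
              = (∫ x : ℝ, x ^ 2 * Real.exp (-b * x ^ 2))
                + ∫ x : ℝ, 2 * d * (x * Real.exp (-b * x ^ 2)) :=
            integral_add h1 (h2.const_mul (2 * d))
          rw [e1, e2, MeasureTheory.integral_const_mul, MeasureTheory.integral_const_mul,
            my_integral_mul_exp_neg_mul_sq hbpos, my_integral_sq_mul_exp_neg_mul_sq hbpos,
            integral_gaussian]
      _ = (v : ℝ) + d ^ 2 := by
          have hsq : Real.sqrt (π / b) = Real.sqrt (2 * π * v) := by
            congr 1
            rw [hb]
            field_simp
          have h2b : (2 * b)⁻¹ = (v : ℝ) := by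
            rw [hb]; field_simp
          have hCs : C * Real.sqrt (2 * π * v) = 1 := by
            rw [hC]
            refine inv_mul_cancel₀ ?_
            positivity
          rw [hsq, h2b]
          calc C * ((v:ℝ) * Real.sqrt (2*π*v) + 2 * d * 0 + d ^ 2 * Real.sqrt (2*π*v))
              = (C * Real.sqrt (2*π*v)) * ((v:ℝ) + d ^ 2) := by ring
            _ = (v:ℝ) + d ^ 2 := by rw [hCs]; ring

lemma my_sq_moment (mm c : ℝ) {v : ℝ≥0} (hv : v ≠ 0) :
    (Integrable (fun x => (x - c) ^ 2) (gaussianReal mm v)) ∧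
      ∫ x, (x - c) ^ 2 ∂(gaussianReal mm v) = (v : ℝ) + (mm - c) ^ 2 := by
  have hmap : (gaussianReal 0 v).map (· + mm) = gaussianReal mm v := by
    rw [gaussianReal_map_add_const mm, zero_add]
  have hφ : AEMeasurable (· + mm) (gaussianReal 0 v) :=
    (measurable_id.add_const mm).aemeasurable
  have hg : AEStronglyMeasurable (fun y : ℝ => (y - c) ^ 2)
      ((gaussianReal 0 v).map (· + mm)) :=
    (continuous_id.sub continuous_const).pow 2 |>.aestronglyMeasurable
  have hcomp : ∀ x : ℝ, ((x + mm) - c) ^ 2 = (x + (mm - c)) ^ 2 := fun x => by ring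
  constructor
  · rw [← hmap, integrable_map_measure hg hφ]
    refine ((my_sq_moment_zero hv (mm - c)).1.congr ?_)
    exact Filter.Eventually.of_forall fun x => by simp only [Function.comp]; rw [hcomp x]
  · rw [← hmap, integral_map hφ hg]
    calc ∫ x, ((x + mm) - c) ^ 2 ∂(gaussianReal 0 v)
        = ∫ x, (x + (mm - c)) ^ 2 ∂(gaussianReal 0 v) := by
          exact integral_congr_ae (Filter.Eventually.of_forall fun x => hcomp x)
      _ = (v : ℝ) + (mm - c) ^ 2 := (my_sq_moment_zero hv (mm - c)).2

lemma my_log_pdf (mm x : ℝ) {v : ℝ≥0} (hv : v ≠ 0) :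
    Real.log (gaussianPDFReal mm v x) =
      -(Real.log (2 * π * v)) / 2 - (x - mm) ^ 2 / (2 * v) := by
  have hv' : (0:ℝ) < v := lt_of_le_of_ne v.2 (by exact_mod_cast (Ne.symm hv))
  rw [gaussianPDFReal, Real.log_mul (by positivity) (Real.exp_pos _).ne',
    Real.log_inv, Real.log_sqrt (by positivity), Real.log_exp]
  ring

lemma my_llr_gauss (m₁ m₂ : ℝ) {v₁ v₂ : ℝ≥0} (h₁ : v₁ ≠ 0) (h₂ : v₂ ≠ 0) :
    llr (gaussianReal m₁ v₁) (gaussianReal m₂ v₂) =ᵐ[gaussianReal m₁ v₁]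
      fun x => Real.log (gaussianPDFReal m₁ v₁ x) - Real.log (gaussianPDFReal m₂ v₂ x) := by
  set P := gaussianReal m₁ v₁
  set Q := gaussianReal m₂ v₂
  have hQ : Q = volume.withDensity (gaussianPDF m₂ v₂) := gaussianReal_of_var_ne_zero m₂ h₂
  have h_rn : P.rnDeriv Q =ᵐ[volume]
      fun x => (gaussianPDF m₂ v₂ x)⁻¹ * P.rnDeriv volume x := by
    rw [hQ]
    exact Measure.rnDeriv_withDensity_right P volume
      (measurable_gaussianPDF m₂ v₂).aemeasurable
      (Filter.Eventually.of_forall fun x => (gaussianPDF_pos _ h₂ x).ne')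
      (Filter.Eventually.of_forall fun x => ENNReal.ofReal_ne_top)
  have h_rn2 : P.rnDeriv volume =ᵐ[volume] gaussianPDF m₁ v₁ := rnDeriv_gaussianReal m₁ v₁
  have hPvol : P ≪ volume := gaussianReal_absolutelyContinuous m₁ h₁
  filter_upwards [hPvol.ae_eq h_rn, hPvol.ae_eq h_rn2] with x hx hx2
  rw [llr_def]
  simp only [hx, hx2]
  rw [ENNReal.toReal_mul, ENNReal.toReal_inv, gaussianPDF,
    ENNReal.toReal_ofReal (gaussianPDFReal_nonneg m₂ v₂ x), gaussianPDF,
    ENNReal.toReal_ofReal (gaussianPDFReal_nonneg m₁ v₁ x),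
    ← div_eq_inv_mul,
    Real.log_div (gaussianPDFReal_pos m₁ v₁ x h₁).ne' (gaussianPDFReal_pos m₂ v₂ x h₂).ne']

lemma my_klDiv_gauss (m₁ m₂ : ℝ) {v₁ v₂ : ℝ≥0} (h₁ : v₁ ≠ 0) (h₂ : v₂ ≠ 0) :
    klDiv (gaussianReal m₁ v₁) (gaussianReal m₂ v₂) =
      ((Real.log ((v₂:ℝ) / (v₁:ℝ)) / 2 + ((v₁:ℝ) + (m₁ - m₂) ^ 2) / (2 * (v₂:ℝ))
        - 1 / 2 : ℝ) : EReal) := by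
  have hv₁ : (0:ℝ) < v₁ := lt_of_le_of_ne v₁.2 (by exact_mod_cast (Ne.symm h₁))
  have hv₂ : (0:ℝ) < v₂ := lt_of_le_of_ne v₂.2 (by exact_mod_cast (Ne.symm h₂))
  set P := gaussianReal m₁ v₁
  have hPQ : P ≪ gaussianReal m₂ v₂ :=
    (gaussianReal_absolutelyContinuous m₁ h₁).trans (gaussianReal_absolutelyContinuous' m₂ h₂)
  -- the nice version of llr
  have hLeq : ∀ x : ℝ, Real.log (gaussianPDFReal m₁ v₁ x) - Real.log (gaussianPDFReal m₂ v₂ x)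
      = Real.log ((v₂:ℝ) / (v₁:ℝ)) / 2 + (2 * (v₂:ℝ))⁻¹ * (x - m₂) ^ 2
        - (2 * (v₁:ℝ))⁻¹ * (x - m₁) ^ 2 := by
    intro x
    rw [my_log_pdf m₁ x h₁, my_log_pdf m₂ x h₂]
    have : Real.log (2 * π * v₂) - Real.log (2 * π * v₁) = Real.log ((v₂:ℝ) / (v₁:ℝ)) := by
      rw [Real.log_mul (by positivity) hv₂.ne', Real.log_mul (by positivity) hv₁.ne',
        Real.log_div hv₂.ne' hv₁.ne']
      ring
    linear_combination this / 2
  have hint1 := (my_sq_moment m₁ m₂ h₁ (v := v₁)).1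
  have hint2 := (my_sq_moment m₁ m₁ h₁ (v := v₁)).1
  have hintL : Integrable (fun x => Real.log ((v₂:ℝ) / (v₁:ℝ)) / 2
      + (2 * (v₂:ℝ))⁻¹ * (x - m₂) ^ 2 - (2 * (v₁:ℝ))⁻¹ * (x - m₁) ^ 2) P :=
    (((integrable_const _).add (hint1.const_mul _)).sub (hint2.const_mul _))
  have hllr := my_llr_gauss m₁ m₂ h₁ h₂
  have hllr' : llr P (gaussianReal m₂ v₂) =ᵐ[P]
      fun x => Real.log ((v₂:ℝ) / (v₁:ℝ)) / 2 + (2 * (v₂:ℝ))⁻¹ * (x - m₂) ^ 2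
        - (2 * (v₁:ℝ))⁻¹ * (x - m₁) ^ 2 := by
    filter_upwards [hllr] with x hx
    rw [hx, hLeq x]
  have hintllr : Integrable (llr P (gaussianReal m₂ v₂)) P := hintL.congr hllr'.symm
  rw [klDiv, if_pos ⟨hPQ, hintllr⟩]
  congr 1
  rw [integral_congr_ae hllr']
  have eA : ∫ x, (Real.log ((v₂:ℝ) / (v₁:ℝ)) / 2 + (2 * (v₂:ℝ))⁻¹ * (x - m₂) ^ 2
      - (2 * (v₁:ℝ))⁻¹ * (x - m₁) ^ 2) ∂P =
      (∫ x, (Real.log ((v₂:ℝ) / (v₁:ℝ)) / 2 + (2 * (v₂:ℝ))⁻¹ * (x - m₂) ^ 2) ∂P)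
        - ∫ x, (2 * (v₁:ℝ))⁻¹ * (x - m₁) ^ 2 ∂P :=
    integral_sub ((integrable_const _).add (hint1.const_mul _)) (hint2.const_mul _)
  have eB : ∫ x, (Real.log ((v₂:ℝ) / (v₁:ℝ)) / 2 + (2 * (v₂:ℝ))⁻¹ * (x - m₂) ^ 2) ∂P =
      (∫ _x, Real.log ((v₂:ℝ) / (v₁:ℝ)) / 2 ∂P) + ∫ x, (2 * (v₂:ℝ))⁻¹ * (x - m₂) ^ 2 ∂P :=
    integral_add (integrable_const _) (hint1.const_mul _)
  rw [eA, eB, integral_const, MeasureTheory.integral_const_mul, MeasureTheory.integral_const_mul,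
    (my_sq_moment m₁ m₂ h₁ (v := v₁)).2, (my_sq_moment m₁ m₁ h₁ (v := v₁)).2]
  simp only [measure_univ, ENNReal.toReal_one, probReal_univ, smul_eq_mul, one_mul, sub_self,
    ne_eq, OfNat.ofNat_ne_zero, not_false_eq_true, zero_pow, add_zero]
  field_simp

lemma my_L2_mul {μ : Measure ℝ} {u w : ℝ → ℝ} (hu : MemLp u 2 μ) (hw : MemLp w 2 μ) :
    Integrable (fun x => u x * w x) μ := by
  have h1 := hu.integrable_sq
  have h2 := hw.integrable_sq
  refine Integrable.mono' ((h1.add h2).const_mul (1/2))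
    (hu.aestronglyMeasurable.mul hw.aestronglyMeasurable) ?_
  filter_upwards with x
  simp only [Pi.add_apply]
  rw [norm_mul, Real.norm_eq_abs, Real.norm_eq_abs]
  nlinarith [sq_nonneg (|u x| - |w x|), sq_abs (u x), sq_abs (w x), abs_nonneg (u x),
    abs_nonneg (w x)]

lemma my_eval (μ : Measure ℝ) [IsProbabilityMeasure μ] (hid : MemLp id 2 μ) {f : ℝ → ℝ}
    (hf : MemLp f 2 μ) {q : ℝ≥0} (hq : q ≠ 0) (a b : ℝ) {ω : ℝ≥0} (hω : ω ≠ 0) :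
    ∫ x, (klDiv (gaussianReal (f x) q) (gaussianReal (a * x + b) ω)).toReal ∂μ
      = Real.log ((ω:ℝ)/(q:ℝ))/2 + ((q:ℝ) + ∫ x, (f x - a*x - b)^2 ∂μ)/(2*(ω:ℝ)) - 1/2 := by
  have hω' : (0:ℝ) < ω := lt_of_le_of_ne ω.2 (by exact_mod_cast (Ne.symm hω))
  have hg2 : MemLp (fun x => f x - a*x - b) 2 μ :=
    (hf.sub (hid.const_mul a)).sub (memLp_const b)
  have hgsq : Integrable (fun x => (f x - a*x - b)^2) μ := hg2.integrable_sq
  have key : ∀ x : ℝ, (klDiv (gaussianReal (f x) q) (gaussianReal (a * x + b) ω)).toReal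
      = (Real.log ((ω:ℝ)/(q:ℝ))/2 + (q:ℝ)/(2*(ω:ℝ)) - 1/2)
        + (2*(ω:ℝ))⁻¹ * (f x - a*x - b)^2 := by
    intro x
    rw [my_klDiv_gauss (f x) (a*x+b) hq hω]
    rw [EReal.toReal_coe]
    field_simp
    ring
  rw [integral_congr_ae (Filter.Eventually.of_forall key)]
  have eA : ∫ x, ((Real.log ((ω:ℝ)/(q:ℝ))/2 + (q:ℝ)/(2*(ω:ℝ)) - 1/2)
      + (2*(ω:ℝ))⁻¹ * (f x - a*x - b)^2) ∂μ =
      (∫ _x, (Real.log ((ω:ℝ)/(q:ℝ))/2 + (q:ℝ)/(2*(ω:ℝ)) - 1/2) ∂μ)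
        + ∫ x, (2*(ω:ℝ))⁻¹ * (f x - a*x - b)^2 ∂μ :=
    integral_add (integrable_const _) (hgsq.const_mul _)
  rw [eA, integral_const, MeasureTheory.integral_const_mul]
  simp only [measure_univ, ENNReal.toReal_one, probReal_univ, smul_eq_mul, one_mul]
  field_simp
  ring

lemma my_residual_min (μ : Measure ℝ) [IsProbabilityMeasure μ]
    (hid : MemLp id 2 μ) {f : ℝ → ℝ} (hf : MemLp f 2 μ)
    {m p a' b' s' : ℝ}
    (hm : m = ∫ x, x ∂μ) (hpdef : p = ∫ x, (x - m) ^ 2 ∂μ) (hp : 0 < p)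
    (ha' : a' = ((∫ x, x * f x ∂μ) - m * ∫ x, f x ∂μ) / p)
    (hb' : b' = (∫ x, f x ∂μ) - a' * m)
    (hs' : s' = ∫ x, (f x - a' * x - b') ^ 2 ∂μ)
    (a b : ℝ) : s' ≤ ∫ x, (f x - a * x - b) ^ 2 ∂μ := by
  have hIx : Integrable (fun x => x) μ := hid.integrable one_le_two
  have hIf : Integrable f μ := hf.integrable one_le_two
  have hIxx : Integrable (fun x => x ^ 2) μ := hid.integrable_sq
  have hIxf : Integrable (fun x => x * f x) μ := my_L2_mul hid hf
  -- second moment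
  have h2mom : ∫ x, x ^ 2 ∂μ = p + m ^ 2 := by
    have e1 : ∫ x, (x - m) ^ 2 ∂μ = ∫ x, (x ^ 2 - (2*m) * x + m ^ 2) ∂μ :=
      integral_congr_ae (Filter.Eventually.of_forall fun x => by ring)
    have e2 : ∫ x, (x ^ 2 - (2*m) * x + m ^ 2) ∂μ
        = (∫ x, (x ^ 2 - (2*m) * x) ∂μ) + ∫ _x, m ^ 2 ∂μ :=
      integral_add (hIxx.sub (hIx.const_mul _)) (integrable_const _)
    have e3 : ∫ x, (x ^ 2 - (2*m) * x) ∂μ = (∫ x, x ^ 2 ∂μ) - ∫ x, (2*m) * x ∂μ :=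
      integral_sub hIxx (hIx.const_mul _)
    rw [e1, e2, e3, integral_const, MeasureTheory.integral_const_mul, ← hm] at hpdef
    simp only [measure_univ, ENNReal.toReal_one, probReal_univ, smul_eq_mul, one_mul] at hpdef
    nlinarith [hpdef]
  -- residual function
  have hg2 : MemLp (fun x => f x - a' * x - b') 2 μ :=
    (hf.sub (hid.const_mul a')).sub (memLp_const b')
  have hIg : Integrable (fun x => f x - a' * x - b') μ := hg2.integrable one_le_two
  have hIg2 : Integrable (fun x => (f x - a' * x - b') ^ 2) μ := hg2.integrable_sq
  have hIxg : Integrable (fun x => x * (f x - a' * x - b')) μ := my_L2_mul hid hg2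
  -- orthogonality
  have hg0 : ∫ x, (f x - a' * x - b') ∂μ = 0 := by
    have e1 : ∫ x, (f x - a' * x - b') ∂μ = (∫ x, (f x - a' * x) ∂μ) - ∫ _x, b' ∂μ :=
      integral_sub (hIf.sub (hIx.const_mul _)) (integrable_const _)
    have e2 : ∫ x, (f x - a' * x) ∂μ = (∫ x, f x ∂μ) - ∫ x, a' * x ∂μ :=
      integral_sub hIf (hIx.const_mul _)
    rw [e1, e2, integral_const, MeasureTheory.integral_const_mul, ← hm]
    simp only [measure_univ, ENNReal.toReal_one, probReal_univ, smul_eq_mul, one_mul]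
    rw [hb']
    ring
  have hxg0 : ∫ x, x * (f x - a' * x - b') ∂μ = 0 := by
    have e0 : ∫ x, x * (f x - a' * x - b') ∂μ
        = ∫ x, (x * f x - a' * x ^ 2 - b' * x) ∂μ :=
      integral_congr_ae (Filter.Eventually.of_forall fun x => by ring)
    have e1 : ∫ x, (x * f x - a' * x ^ 2 - b' * x) ∂μ
        = (∫ x, (x * f x - a' * x ^ 2) ∂μ) - ∫ x, b' * x ∂μ :=
      integral_sub (hIxf.sub (hIxx.const_mul _)) (hIx.const_mul _)
    have e2 : ∫ x, (x * f x - a' * x ^ 2) ∂μ = (∫ x, x * f x ∂μ) - ∫ x, a' * x ^ 2 ∂μ :=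
      integral_sub hIxf (hIxx.const_mul _)
    rw [e0, e1, e2, MeasureTheory.integral_const_mul, MeasureTheory.integral_const_mul,
      h2mom, ← hm]
    have hap : a' * p = (∫ x, x * f x ∂μ) - m * ∫ x, f x ∂μ := by
      rw [ha']; field_simp
    rw [hb']
    nlinarith [hap]
  -- expansion
  have hh2 : MemLp (fun x => (a' - a) * x + (b' - b)) 2 μ :=
    (hid.const_mul (a' - a)).add (memLp_const (b' - b))
  have hIh2 : Integrable (fun x => ((a' - a) * x + (b' - b)) ^ 2) μ := hh2.integrable_sq
  have expand : ∀ x : ℝ, (f x - a * x - b) ^ 2 =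
      (f x - a' * x - b') ^ 2 + (2*(a' - a)) * (x * (f x - a' * x - b'))
        + (2*(b' - b)) * (f x - a' * x - b') + ((a' - a) * x + (b' - b)) ^ 2 := by
    intro x; ring
  have e0 : ∫ x, (f x - a * x - b) ^ 2 ∂μ = ∫ x, ((f x - a' * x - b') ^ 2
      + (2*(a' - a)) * (x * (f x - a' * x - b'))
      + (2*(b' - b)) * (f x - a' * x - b') + ((a' - a) * x + (b' - b)) ^ 2) ∂μ :=
    integral_congr_ae (Filter.Eventually.of_forall expand)
  have i1 : Integrable (fun x => (f x - a' * x - b') ^ 2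
      + (2*(a' - a)) * (x * (f x - a' * x - b'))) μ := hIg2.add (hIxg.const_mul _)
  have i2 : Integrable (fun x => (f x - a' * x - b') ^ 2
      + (2*(a' - a)) * (x * (f x - a' * x - b'))
      + (2*(b' - b)) * (f x - a' * x - b')) μ := i1.add (hIg.const_mul _)
  have e1 : ∫ x, ((f x - a' * x - b') ^ 2
      + (2*(a' - a)) * (x * (f x - a' * x - b'))
      + (2*(b' - b)) * (f x - a' * x - b') + ((a' - a) * x + (b' - b)) ^ 2) ∂μ
      = (∫ x, ((f x - a' * x - b') ^ 2
        + (2*(a' - a)) * (x * (f x - a' * x - b'))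
        + (2*(b' - b)) * (f x - a' * x - b')) ∂μ)
        + ∫ x, ((a' - a) * x + (b' - b)) ^ 2 ∂μ := integral_add i2 hIh2
  have e2 : ∫ x, ((f x - a' * x - b') ^ 2
      + (2*(a' - a)) * (x * (f x - a' * x - b'))
      + (2*(b' - b)) * (f x - a' * x - b')) ∂μ
      = (∫ x, ((f x - a' * x - b') ^ 2
        + (2*(a' - a)) * (x * (f x - a' * x - b'))) ∂μ)
        + ∫ x, (2*(b' - b)) * (f x - a' * x - b') ∂μ := integral_add i1 (hIg.const_mul _)
  have e3 : ∫ x, ((f x - a' * x - b') ^ 2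
      + (2*(a' - a)) * (x * (f x - a' * x - b'))) ∂μ
      = (∫ x, (f x - a' * x - b') ^ 2 ∂μ)
        + ∫ x, (2*(a' - a)) * (x * (f x - a' * x - b')) ∂μ :=
    integral_add hIg2 (hIxg.const_mul _)
  have hpos : 0 ≤ ∫ x, ((a' - a) * x + (b' - b)) ^ 2 ∂μ :=
    integral_nonneg fun x => sq_nonneg _
  rw [e0, e1, e2, e3, MeasureTheory.integral_const_mul, MeasureTheory.integral_const_mul,
    hxg0, hg0, ← hs']
  linarith

/-- Optimality of statistical linearization: the affine-Gaussian parameters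
`a' = Cov(x, f x)/p`, `b' = 𝔼 f - a' m`, `ω' = q + s'` (with `s'` the mean-square residual)
minimize the expected KL divergence `∫ KL(N(f x, q) ‖ N(a x + b, ω)) dμ(x)` over all
`a, b ∈ ℝ` and `ω > 0`, and the minimum value is `½ log ((q + s')/q)`. -/
theorem statistical_linearization_optimal_klDiv (μ : Measure ℝ) [IsProbabilityMeasure μ]
    (hid : MemLp id 2 μ) (f : ℝ → ℝ) (hfm : Measurable f) (hf : MemLp f 2 μ)
    (q : ℝ≥0) (hq : 0 < q)
    (m p a' b' s' : ℝ)
    (hm : m = ∫ x, x ∂μ) (hpdef : p = ∫ x, (x - m) ^ 2 ∂μ) (hp : 0 < p)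
    (ha' : a' = ((∫ x, x * f x ∂μ) - m * ∫ x, f x ∂μ) / p)
    (hb' : b' = (∫ x, f x ∂μ) - a' * m)
    (hs' : s' = ∫ x, (f x - a' * x - b') ^ 2 ∂μ) :
    (∀ (a b : ℝ) (ω : ℝ≥0), 0 < ω →
      ∫ x, (klDiv (gaussianReal (f x) q)
          (gaussianReal (a' * x + b') (((q : ℝ) + s').toNNReal))).toReal ∂μ ≤
        ∫ x, (klDiv (gaussianReal (f x) q) (gaussianReal (a * x + b) ω)).toReal ∂μ) ∧
    ∫ x, (klDiv (gaussianReal (f x) q)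
        (gaussianReal (a' * x + b') (((q : ℝ) + s').toNNReal))).toReal ∂μ =
      1 / 2 * Real.log (((q : ℝ) + s') / (q : ℝ)) := by
  have hq0 : q ≠ 0 := hq.ne'
  have hqR : (0:ℝ) < q := hq
  have hs0 : 0 ≤ s' := hs' ▸ integral_nonneg fun x => sq_nonneg _
  have hqs : (0:ℝ) < (q:ℝ) + s' := by positivity
  have hω0 : ((q : ℝ) + s').toNNReal ≠ 0 := (Real.toNNReal_pos.mpr hqs).ne'
  have hωc : ((((q : ℝ) + s').toNNReal : ℝ≥0) : ℝ) = (q:ℝ) + s' := Real.coe_toNNReal _ hqs.le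
  have hopt : ∫ x, (klDiv (gaussianReal (f x) q)
      (gaussianReal (a' * x + b') (((q : ℝ) + s').toNNReal))).toReal ∂μ =
      1 / 2 * Real.log (((q : ℝ) + s') / (q : ℝ)) := by
    rw [my_eval μ hid hf hq0 a' b' hω0, hωc, ← hs']
    field_simp
    ring
  refine ⟨fun a b ω hω => ?_, hopt⟩
  rw [hopt, my_eval μ hid hf hq0 a b hω.ne']
  set R := ∫ x, (f x - a*x - b)^2 ∂μ with hR
  have hRs : s' ≤ R := my_residual_min μ hid hf hm hpdef hp ha' hb' hs' a b
  have hωR : (0:ℝ) < ω := hω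
  -- scalar inequality
  have hlog : Real.log (((q:ℝ) + s') / (ω:ℝ)) ≤ ((q:ℝ) + s') / (ω:ℝ) - 1 :=
    Real.log_le_sub_one_of_pos (by positivity)
  rw [Real.log_div hqs.ne' hωR.ne'] at hlog
  rw [Real.log_div (by positivity : ((ω:ℝ)) ≠ 0) hqR.ne',
    Real.log_div hqs.ne' hqR.ne']
  have hdiv : ((q:ℝ) + s') / (ω:ℝ) ≤ ((q:ℝ) + R) / (ω:ℝ) :=
    (div_le_div_iff_of_pos_right hωR).mpr (by linarith)
  have hhalf : ((q:ℝ) + R) / (2*(ω:ℝ)) = (((q:ℝ) + R) / (ω:ℝ)) / 2 := by ring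
  linarith
end

section
/- Let μ be a probability measure on ℝ, let f : ℝ → ℝ be measurable with (f(x) − a·x − b)² μ-integrable, and let q, ω > 0 and a, b ∈ ℝ. Then ∫ KL( N(f(x), q) ‖ N(a·x + b, ω) ) dμ(x) = 0 if and only if ω = q and f(x) = a·x + b for μ-almost every x. -/
open MeasureTheory ProbabilityTheory Filter Real Topology
open scoped NNReal ENNReal Classical

lemma integrable_sq_mul_exp {b : ℝ} (hb : 0 < b) :
    Integrable (fun x : ℝ => x ^ 2 * rexp (-b * x ^ 2)) := by
  have := integrable_rpow_mul_exp_neg_mul_sq hb (s := 2) (by norm_num)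
  simpa [Real.rpow_two] using this

lemma integrable_id_mul_exp {b : ℝ} (hb : 0 < b) :
    Integrable (fun x : ℝ => x * rexp (-b * x ^ 2)) := by
  have := integrable_rpow_mul_exp_neg_mul_sq hb (s := 1) (by norm_num)
  simpa using this

lemma integral_id_mul_exp {b : ℝ} (hb : 0 < b) :
    ∫ x : ℝ, x * rexp (-b * x ^ 2) = 0 := by
  have h := integral_neg_eq_self (fun x : ℝ => x * rexp (-b * x ^ 2)) (volume : Measure ℝ)
  have h2 : (∫ x : ℝ, (-x) * rexp (-b * (-x) ^ 2))
      = ∫ x : ℝ, -(x * rexp (-b * x ^ 2)) := by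
    congr 1; funext x; ring_nf
  rw [h2, integral_neg] at h
  linarith

lemma integral_sq_mul_exp {b : ℝ} (hb : 0 < b) :
    ∫ x : ℝ, x ^ 2 * rexp (-b * x ^ 2) = Real.sqrt π / (2 * b * Real.sqrt b) := by
  have hint := integrable_sq_mul_exp hb
  have hIoi : ∫ x in Set.Ioi (0:ℝ), x ^ 2 * rexp (-b * x ^ 2)
      = b ^ (-(3:ℝ)/2) * (1 / 2) * Real.Gamma (3 / 2) := by
    have := integral_rpow_mul_exp_neg_mul_rpow (p := 2) (q := 2) (by norm_num) (by norm_num) hb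
    simp only [Real.rpow_two] at this
    rw [this]
    norm_num
  have hGamma : Real.Gamma (3 / 2) = Real.sqrt π / 2 := by
    have : Real.Gamma ((1:ℝ)/2 + 1) = (1/2) * Real.Gamma (1/2) :=
      Real.Gamma_add_one (by norm_num)
    rw [show (3:ℝ)/2 = 1/2 + 1 by norm_num, this, Real.Gamma_one_half_eq]
    ring
  have hb' : b ^ (-(3:ℝ)/2) = (b * Real.sqrt b)⁻¹ := by
    rw [show (-(3:ℝ)/2) = -(1 + 1/2) by norm_num, Real.rpow_neg hb.le,
      Real.rpow_add hb, Real.rpow_one, ← Real.sqrt_eq_rpow]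
  -- now split ℝ into Iic 0 and Ioi 0
  have hsplit : (∫ x in Set.Iic (0:ℝ), x ^ 2 * rexp (-b * x ^ 2))
      + ∫ x in Set.Ioi (0:ℝ), x ^ 2 * rexp (-b * x ^ 2)
      = ∫ x : ℝ, x ^ 2 * rexp (-b * x ^ 2) :=
    intervalIntegral.integral_Iic_add_Ioi hint.integrableOn hint.integrableOn
  have hneg : (∫ x in Set.Iic (0:ℝ), x ^ 2 * rexp (-b * x ^ 2))
      = ∫ x in Set.Ioi (0:ℝ), x ^ 2 * rexp (-b * x ^ 2) := by
    have := integral_comp_neg_Ioi (c := (0:ℝ)) (fun x => x ^ 2 * rexp (-b * x ^ 2))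
    rw [neg_zero] at this
    rw [← this]
    congr 1; funext x; ring_nf
  rw [← hsplit, hneg, hIoi, hGamma, hb']
  have h1 : Real.sqrt b > 0 := Real.sqrt_pos.mpr hb
  field_simp
  ring

lemma gaussian_integral_eq (m : ℝ) {v : ℝ≥0} (hv : v ≠ 0) (g : ℝ → ℝ) :
    ∫ x, g x ∂(gaussianReal m v) = ∫ x, gaussianPDFReal m v x * g x := by
  rw [gaussianReal_of_var_ne_zero _ hv]
  have h : gaussianPDF m v = fun x => ((Real.toNNReal (gaussianPDFReal m v x) : ℝ≥0) : ℝ≥0∞) := by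
    funext x; rfl
  rw [h, integral_withDensity_eq_integral_smul
    ((measurable_gaussianPDFReal m v).real_toNNReal) g]
  congr 1; funext x
  simp [NNReal.smul_def, Real.coe_toNNReal _ (gaussianPDFReal_nonneg m v x)]

lemma gaussian_integrable_iff (m : ℝ) {v : ℝ≥0} (hv : v ≠ 0) (g : ℝ → ℝ) :
    Integrable g (gaussianReal m v) ↔
      Integrable (fun x => gaussianPDFReal m v x * g x) volume := by
  rw [gaussianReal_of_var_ne_zero _ hv]
  have h : gaussianPDF m v = fun x => ((Real.toNNReal (gaussianPDFReal m v x) : ℝ≥0) : ℝ≥0∞) := by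
    funext x; rfl
  rw [h, integrable_withDensity_iff_integrable_smul
    ((measurable_gaussianPDFReal m v).real_toNNReal)]
  constructor <;> intro hh <;> refine hh.congr (Eventually.of_forall fun x => ?_) <;>
    simp [NNReal.smul_def, Real.coe_toNNReal _ (gaussianPDFReal_nonneg m v x)]

-- pdf rewritten in centered exp form
lemma pdf_eq (m : ℝ) (v : ℝ≥0) (x : ℝ) :
    gaussianPDFReal m v x = (√(2 * π * v))⁻¹ * rexp (-(2 * (v:ℝ))⁻¹ * (x - m) ^ 2) := by
  rw [gaussianPDFReal]
  ring_nf

-- integrability of pdf * quadratic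
lemma integrable_pdf_mul_quad (m : ℝ) {v : ℝ≥0} (hv : 0 < v) (A B C : ℝ) :
    Integrable (fun x => gaussianPDFReal m v x * (A * x ^ 2 + B * x + C)) volume := by
  have hv' : (0:ℝ) < (v:ℝ) := hv
  have hb : (0:ℝ) < (2 * (v:ℝ))⁻¹ := by positivity
  set b : ℝ := (2 * (v:ℝ))⁻¹ with hbdef
  set c : ℝ := (√(2 * π * v))⁻¹ with hcdef
  -- translate by m
  have key : ∀ (A' B' C' : ℝ),
      Integrable (fun x : ℝ => rexp (-b * x ^ 2) * (A' * x ^ 2 + B' * x + C')) volume := by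
    intro A' B' C'
    have h2 : Integrable (fun x : ℝ => A' * (x ^ 2 * rexp (-b * x ^ 2))) volume := by
      have := integrable_rpow_mul_exp_neg_mul_sq hb (s := 2) (by norm_num)
      simp only [Real.rpow_two] at this
      exact this.const_mul A'
    have h1 : Integrable (fun x : ℝ => B' * (x * rexp (-b * x ^ 2))) volume := by
      have := integrable_rpow_mul_exp_neg_mul_sq hb (s := 1) (by norm_num)
      simp only [Real.rpow_one] at this
      exact this.const_mul B'
    have h0 : Integrable (fun x : ℝ => C' * rexp (-b * x ^ 2)) volume :=
      (integrable_exp_neg_mul_sq hb).const_mul C'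
    refine ((h2.add h1).add h0).congr (Eventually.of_forall fun x => ?_)
    simp only [Pi.add_apply]
    ring
  have h := ((key A (2 * A * m + B) (A * m ^ 2 + B * m + C)).const_mul c).comp_add_right (-m)
  refine h.congr (Eventually.of_forall fun x => ?_)
  simp only [pdf_eq, hcdef, hbdef]
  ring_nf

lemma integral_pdf_mul_quad (m : ℝ) {v : ℝ≥0} (hv : 0 < v) (A B C : ℝ) :
    ∫ x, gaussianPDFReal m v x * (A * x ^ 2 + B * x + C)
      = A * ((v:ℝ) + m ^ 2) + B * m + C := by
  have hv' : (0:ℝ) < (v:ℝ) := hv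
  have hb : (0:ℝ) < (2 * (v:ℝ))⁻¹ := by positivity
  set b : ℝ := (2 * (v:ℝ))⁻¹ with hbdef
  rw [← integral_add_right_eq_self (fun x => gaussianPDFReal m v x * (A * x ^ 2 + B * x + C)) m]
  have heq : ∀ x : ℝ, gaussianPDFReal m v (x + m) * (A * (x + m) ^ 2 + B * (x + m) + C)
      = (√(2 * π * v))⁻¹ * (A * (x ^ 2 * rexp (-b * x ^ 2))
        + ((2 * A * m + B) * (x * rexp (-b * x ^ 2))
        + (A * m ^ 2 + B * m + C) * rexp (-b * x ^ 2))) := by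
    intro x; simp only [pdf_eq, hbdef]; ring_nf
  simp only [heq]
  have i2 : Integrable (fun x : ℝ => x ^ 2 * rexp (-b * x ^ 2)) volume := by
    have := integrable_rpow_mul_exp_neg_mul_sq hb (s := 2) (by norm_num)
    simpa [Real.rpow_two] using this
  have i1 : Integrable (fun x : ℝ => x * rexp (-b * x ^ 2)) volume := by
    have := integrable_rpow_mul_exp_neg_mul_sq hb (s := 1) (by norm_num)
    simpa using this
  have i0 : Integrable (fun x : ℝ => rexp (-b * x ^ 2)) volume := integrable_exp_neg_mul_sq hb
  have i10 : Integrable (fun a : ℝ => (2 * A * m + B) * (a * rexp (-b * a ^ 2))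
      + (A * m ^ 2 + B * m + C) * rexp (-b * a ^ 2)) volume :=
    ((i1.const_mul _).add (i0.const_mul _)).congr (Eventually.of_forall fun x => rfl)
  rw [integral_const_mul, integral_add (i2.const_mul _) i10,
    integral_add (i1.const_mul _) (i0.const_mul _), integral_const_mul, integral_const_mul,
    integral_const_mul, integral_sq_mul_exp hb, integral_id_mul_exp hb, integral_gaussian]
  -- algebra with square roots
  have h2v : (0:ℝ) < 2 * (v:ℝ) := by positivity
  have hsv : √(2 * (v:ℝ)) > 0 := Real.sqrt_pos.mpr h2v
  have hsp : √π > 0 := Real.sqrt_pos.mpr Real.pi_pos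
  have hroot1 : √(2 * π * (v:ℝ)) = √π * √(2 * (v:ℝ)) := by
    rw [show 2 * π * (v:ℝ) = π * (2 * (v:ℝ)) by ring, Real.sqrt_mul Real.pi_pos.le]
  have hroot2 : √b = (√(2 * (v:ℝ)))⁻¹ := by
    rw [hbdef, Real.sqrt_inv]
  have hroot3 : √(π / b) = √π * √(2 * (v:ℝ)) := by
    rw [hbdef, div_inv_eq_mul, Real.sqrt_mul Real.pi_pos.le]
  have hsq : √(2 * (v:ℝ)) ^ 2 = 2 * (v:ℝ) := Real.sq_sqrt h2v.le
  rw [hroot1, hroot2, hroot3, hbdef]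
  field_simp
  nlinarith [sq_nonneg (√(2 * (v:ℝ))), hsq, hsv, hsp, Real.sq_sqrt Real.pi_pos.le]
lemma gauss_withDensity (m1 m2 : ℝ) {v w : ℝ≥0} (hv : v ≠ 0) (hw : w ≠ 0) :
    (gaussianReal m2 w).withDensity
      (fun x => ENNReal.ofReal (gaussianPDFReal m1 v x / gaussianPDFReal m2 w x))
      = gaussianReal m1 v := by
  rw [gaussianReal_of_var_ne_zero _ hw, gaussianReal_of_var_ne_zero _ hv,
    ← withDensity_mul _ (g := fun x => ENNReal.ofReal (gaussianPDFReal m1 v x / gaussianPDFReal m2 w x))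
        (measurable_gaussianPDF _ _)
      (((measurable_gaussianPDFReal m1 v).div (measurable_gaussianPDFReal m2 w)).ennreal_ofReal :
        Measurable fun x => ENNReal.ofReal (gaussianPDFReal m1 v x / gaussianPDFReal m2 w x))]
  congr 1
  funext x
  have h2 : 0 < gaussianPDFReal m2 w x := gaussianPDFReal_pos _ _ _ hw
  simp only [gaussianPDF, Pi.mul_apply]
  rw [← ENNReal.ofReal_mul (gaussianPDFReal_nonneg _ _ _)]
  congr 1
  field_simp

lemma gauss_ac (m1 m2 : ℝ) {v w : ℝ≥0} (hv : v ≠ 0) (hw : w ≠ 0) :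
    gaussianReal m1 v ≪ gaussianReal m2 w := by
  rw [← gauss_withDensity m1 m2 hv hw]
  exact withDensity_absolutelyContinuous _ _

lemma gauss_rnDeriv (m1 m2 : ℝ) {v w : ℝ≥0} (hv : v ≠ 0) (hw : w ≠ 0) :
    (gaussianReal m1 v).rnDeriv (gaussianReal m2 w) =ᵐ[gaussianReal m2 w]
      fun x => ENNReal.ofReal (gaussianPDFReal m1 v x / gaussianPDFReal m2 w x) := by
  conv_lhs => rw [← gauss_withDensity m1 m2 hv hw]
  exact Measure.rnDeriv_withDensity _
    (((measurable_gaussianPDFReal m1 v).div (measurable_gaussianPDFReal m2 w)).ennreal_ofReal)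

lemma gauss_llr (m1 m2 : ℝ) {v w : ℝ≥0} (hv : v ≠ 0) (hw : w ≠ 0) :
    llr (gaussianReal m1 v) (gaussianReal m2 w) =ᵐ[gaussianReal m1 v]
      fun x => Real.log (gaussianPDFReal m1 v x) - Real.log (gaussianPDFReal m2 w x) := by
  have h := (gauss_ac m1 m2 hv hw).ae_le (gauss_rnDeriv m1 m2 hv hw)
  filter_upwards [h] with x hx
  rw [llr, hx, ENNReal.toReal_ofReal
    (div_nonneg (gaussianPDFReal_nonneg _ _ _) (gaussianPDFReal_nonneg _ _ _)),
    Real.log_div (gaussianPDFReal_pos _ _ _ hv).ne' (gaussianPDFReal_pos _ _ _ hw).ne']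

lemma integrable_sub_sq_gauss (m c : ℝ) {v : ℝ≥0} (hv : 0 < v) :
    Integrable (fun x => (x - c) ^ 2) (gaussianReal m v) := by
  rw [gaussian_integrable_iff m hv.ne']
  refine (integrable_pdf_mul_quad m hv 1 (-2 * c) (c ^ 2)).congr
    (Eventually.of_forall fun x => ?_)
  ring

lemma integral_sub_sq_gauss (m c : ℝ) {v : ℝ≥0} (hv : 0 < v) :
    ∫ x, (x - c) ^ 2 ∂(gaussianReal m v) = (v : ℝ) + (m - c) ^ 2 := by
  rw [gaussian_integral_eq m hv.ne']
  have : ∀ x : ℝ, gaussianPDFReal m v x * (x - c) ^ 2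
      = gaussianPDFReal m v x * (1 * x ^ 2 + (-2 * c) * x + c ^ 2) := by intro x; ring
  simp only [this]
  rw [integral_pdf_mul_quad m hv]
  ring
lemma log_sqrt_two_pi_sub (v w : ℝ≥0) (hv : 0 < v) (hw : 0 < w) :
    Real.log (√(2 * π * w)) - Real.log (√(2 * π * v))
      = (Real.log (w:ℝ) - Real.log (v:ℝ)) / 2 := by
  have hv' : (0:ℝ) < v := hv
  have hw' : (0:ℝ) < w := hw
  have h2π : (0:ℝ) < 2 * π := by positivity
  rw [Real.log_sqrt (by positivity), Real.log_sqrt (by positivity),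
    Real.log_mul h2π.ne' hw'.ne', Real.log_mul h2π.ne' hv'.ne']
  ring

lemma klDiv_gauss (m1 m2 : ℝ) {v w : ℝ≥0} (hv : 0 < v) (hw : 0 < w) :
    klDiv (gaussianReal m1 v) (gaussianReal m2 w)
      = (((Real.log (w:ℝ) - Real.log (v:ℝ)) / 2
          + ((v:ℝ) + (m1 - m2) ^ 2) / (2 * w) - 1 / 2 : ℝ) : EReal) := by
  have hv' : (0:ℝ) < v := hv
  have hw' : (0:ℝ) < w := hw
  set P := gaussianReal m1 v
  set Q := gaussianReal m2 w
  set K : ℝ := (Real.log (w:ℝ) - Real.log (v:ℝ)) / 2 with hK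
  set L : ℝ → ℝ := fun x => K + ((2 * (w:ℝ))⁻¹ * (x - m2) ^ 2 - (2 * (v:ℝ))⁻¹ * (x - m1) ^ 2)
    with hL
  -- llr =ᵐ[P] L
  have hllr : llr P Q =ᵐ[P] L := by
    filter_upwards [gauss_llr m1 m2 hv.ne' hw.ne'] with x hx
    rw [hx]
    have h1 : (0:ℝ) < (√(2 * π * (v:ℝ)))⁻¹ := by positivity
    have h2 : (0:ℝ) < (√(2 * π * (w:ℝ)))⁻¹ := by positivity
    rw [gaussianPDFReal, gaussianPDFReal, Real.log_mul h1.ne' (Real.exp_pos _).ne',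
      Real.log_mul h2.ne' (Real.exp_pos _).ne', Real.log_exp, Real.log_exp,
      Real.log_inv, Real.log_inv, hL]
    simp only
    rw [hK, ← log_sqrt_two_pi_sub v w hv hw]
    field_simp
    ring
  -- integrability of L wrt P
  have hint2 : Integrable (fun x => (x - m2) ^ 2) P := integrable_sub_sq_gauss m1 m2 hv
  have hint1 : Integrable (fun x => (x - m1) ^ 2) P := integrable_sub_sq_gauss m1 m1 hv
  have hLint : Integrable L P := by
    refine (integrable_const K).add ((hint2.const_mul _).sub (hint1.const_mul _))
  have hllrint : Integrable (llr P Q) P := hLint.congr hllr.symm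
  have hac : P ≪ Q := gauss_ac m1 m2 hv.ne' hw.ne'
  rw [klDiv, if_pos ⟨hac, hllrint⟩]
  congr 1
  rw [integral_congr_ae hllr, hL]
  simp only
  have hsub : Integrable (fun x : ℝ => (2 * (w:ℝ))⁻¹ * (x - m2) ^ 2
      - (2 * (v:ℝ))⁻¹ * (x - m1) ^ 2) P :=
    ((hint2.const_mul _).sub (hint1.const_mul _)).congr (Eventually.of_forall fun x => rfl)
  rw [integral_add (integrable_const K) hsub,
    integral_sub (hint2.const_mul _) (hint1.const_mul _), integral_const,
    integral_const_mul, integral_const_mul, integral_sub_sq_gauss m1 m2 hv,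
    integral_sub_sq_gauss m1 m1 hv]
  simp only [measure_univ, probReal_univ, ENNReal.toReal_one, smul_eq_mul, one_mul]
  field_simp
  ring
/-- The expected KL divergence `∫ KL(N(f x, q) ‖ N(a x + b, ω)) dμ(x)` vanishes if and only if
`ω = q` and `f x = a x + b` for `μ`-almost every `x`. -/
theorem integral_klDiv_gaussian_affine_eq_zero_iff (μ : Measure ℝ) [IsProbabilityMeasure μ]
    (f : ℝ → ℝ) (hf : Measurable f) (q ω : ℝ≥0) (hq : 0 < q) (hω : 0 < ω) (a b : ℝ)
    (hint : Integrable (fun x ↦ (f x - a * x - b) ^ 2) μ) :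
    ∫ x, (klDiv (gaussianReal (f x) q) (gaussianReal (a * x + b) ω)).toReal ∂μ = 0 ↔
      ω = q ∧ ∀ᵐ x ∂μ, f x = a * x + b := by
  have hq' : (0:ℝ) < q := hq
  have hω' : (0:ℝ) < ω := hω
  obtain ⟨C, hC⟩ : ∃ C : ℝ,
      C = (Real.log (ω:ℝ) - Real.log (q:ℝ)) / 2 + (q:ℝ) / (2 * ω) - 1 / 2 := ⟨_, rfl⟩
  have hpt : ∀ x : ℝ, (klDiv (gaussianReal (f x) q) (gaussianReal (a * x + b) ω)).toReal
      = C + (2 * (ω:ℝ))⁻¹ * (f x - a * x - b) ^ 2 := by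
    intro x
    rw [klDiv_gauss (f x) (a * x + b) hq hω, EReal.toReal_coe, hC]
    ring
  simp only [hpt]
  have hI : Integrable (fun x => (2 * (ω:ℝ))⁻¹ * (f x - a * x - b) ^ 2) μ := hint.const_mul _
  rw [integral_add (integrable_const C) hI, integral_const, integral_const_mul]
  simp only [measure_univ, probReal_univ, ENNReal.toReal_one, smul_eq_mul, one_mul]
  have hInn : (0:ℝ) ≤ ∫ x, (f x - a * x - b) ^ 2 ∂μ := integral_nonneg fun x => sq_nonneg _
  have hinv : (0:ℝ) < (2 * (ω:ℝ))⁻¹ := by positivity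
  have hCnn : 0 ≤ C := by
    have hlog := Real.log_le_sub_one_of_pos (show (0:ℝ) < (q:ℝ)/(ω:ℝ) by positivity)
    rw [Real.log_div hq'.ne' hω'.ne'] at hlog
    have h2 : (q:ℝ)/(2*ω) = ((q:ℝ)/(ω:ℝ))/2 := by ring
    rw [hC, h2]
    linarith
  have hzero : (∫ x, (f x - a * x - b) ^ 2 ∂μ) = 0 ↔ ∀ᵐ x ∂μ, f x = a * x + b := by
    rw [integral_eq_zero_iff_of_nonneg (fun x => sq_nonneg _) hint]
    constructor <;> intro h <;> filter_upwards [h] with x hx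
    · have : f x - a * x - b = 0 := by
        have := hx
        simpa [pow_eq_zero_iff] using this
      linarith
    · simp [hx]
  constructor
  · intro h
    have hprod : (0:ℝ) ≤ (2 * (ω:ℝ))⁻¹ * ∫ x, (f x - a * x - b) ^ 2 ∂μ :=
      mul_nonneg hinv.le hInn
    have hC0 : C = 0 := by linarith
    have hI0 : (∫ x, (f x - a * x - b) ^ 2 ∂μ) = 0 := by
      have := hprod
      nlinarith
    refine ⟨?_, hzero.mp hI0⟩
    by_contra hne
    have hne' : (q:ℝ)/(ω:ℝ) ≠ 1 := by
      intro h1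
      rw [div_eq_one_iff_eq hω'.ne'] at h1
      exact hne (NNReal.coe_injective h1).symm
    have hlog := Real.log_lt_sub_one_of_pos (show (0:ℝ) < (q:ℝ)/(ω:ℝ) by positivity) hne'
    rw [Real.log_div hq'.ne' hω'.ne'] at hlog
    have h2 : (q:ℝ)/(2*ω) = ((q:ℝ)/(ω:ℝ))/2 := by ring
    rw [hC, h2] at hC0
    linarith
  · rintro ⟨rfl, hae⟩
    have hC0 : C = 0 := by
      rw [hC, sub_self, zero_div, zero_add]
      rw [div_mul_eq_div_div_swap, div_self hω'.ne']
      norm_num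
    have hI0 : (∫ x, (f x - a * x - b) ^ 2 ∂μ) = 0 := hzero.mpr hae
    rw [hC0, hI0, mul_zero, add_zero]
end
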